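/- If φ has a satisfying truth assignment α, then the set K consisting of all log₂(s+1) consistency columns together with, for each i ∈ [log₂ r], one column among B_i's columns whose corresponding assignment agrees with α on the variables of B_i, is a solution for the instance (A, k): |K| = log₂(s+1) + log₂ r = k and the rows of A restricted to K are pairwise distinct. -/

import Mathlib

/-!
The construction of the paper.  Rows and columns are 0-indexed here:
* `r ≥ 2` is a power of two, the number of variables of the CNF formula `φ`;
  variables are elements of `Fin r`; a literal is a variable plus a polarity.
* `s = 2 ^ ℓ - 1` (with `ℓ ≥ 1`) is the number of clauses; clause `q : Fin s`
  is the finite set `Clause q` of literals.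
* `L = log₂ r` is the number of bundles; bundle `i` is a list `B i` of exactly
  `r' = ⌈r / log₂ r⌉` variables (with repetitions allowed), and every variable
  occurs in exactly one bundle.
* For every bundle `i` there is a list of `ρ = 2 ^ r'` truth assignments
  `asg i p : Fin r → Bool` (`p : Fin ρ`, only the values on `B i`'s variables are
  relevant) containing every assignment of `B i`'s variables at least once.
* The matrix `A` has `n = ℓ + ρ * L` columns: the `ℓ` consistency columns
  `0, …, ℓ - 1`, followed, for each bundle `i`, by `B i`'s columns
  `ℓ + i * ρ, …, ℓ + (i + 1) * ρ - 1` (the `p`-th corresponding to assignment `p`).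
* The matrix `A` has `m = 1 + L + 2 * s` rows: the all-zero row `0`, the bundle
  indicator rows `1, …, L` (row `i + 1` is `1` exactly on bundle `i`'s columns),
  and, for each clause `q : Fin s`, the odd row `1 + L + 2 * q` (the `ℓ`-bit binary
  encoding of `q + 1` on the consistency columns and `sat_i(p, q)` on the `p`-th of
  bundle `i`'s columns) and the even row `1 + L + 2 * q + 1` (the encoding of `q + 1`
  on the consistency columns and `0` elsewhere).
* `k = ℓ + L`.  A solution is a set `K` of at most `k` columns such that the rows
  of `A` restricted to the columns in `K` are pairwise distinct.
-/

/-- A literal over variables `Fin r`: a variable together with a polarity. -/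
structure DVLit (r : ℕ) where
  var : Fin r
  pos : Bool
deriving DecidableEq

/-- All the data of the construction: the CNF formula `φ` (variables, clauses),
the bundles, and the lists of truth assignments of each bundle. -/
structure DVInstance where
  /-- number of variables -/
  r : ℕ
  hr : 2 ≤ r
  hrpow : ∃ t : ℕ, r = 2 ^ t
  ℓ : ℕ
  hℓ : 1 ≤ ℓ
  /-- number of clauses -/
  s : ℕ
  hs : s = 2 ^ ℓ - 1
  /-- the clauses of `φ` -/
  Clause : Fin s → Finset (DVLit r)
  /-- the bundles: lists of variables of length `r' = ⌈r / log₂ r⌉` -/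
  B : Fin (Nat.log 2 r) → List (Fin r)
  hBlen : ∀ i, (B i).length = (r + Nat.log 2 r - 1) / Nat.log 2 r
  /-- every variable occurs in exactly one bundle -/
  hBpart : ∀ v : Fin r, ∃! i, v ∈ B i
  /-- the list of `ρ = 2 ^ r'` truth assignments of each bundle -/
  asg : Fin (Nat.log 2 r) → Fin (2 ^ ((r + Nat.log 2 r - 1) / Nat.log 2 r)) →
    Fin r → Bool
  /-- every assignment of a bundle's variables occurs at least once in its list -/
  hasg : ∀ i, ∀ β : Fin r → Bool, ∃ p, ∀ v ∈ B i, asg i p v = β v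

namespace DVInstance

variable (D : DVInstance)

/-- `L = log₂ r`, the number of bundles. -/
def L : ℕ := Nat.log 2 D.r

/-- `r' = ⌈r / log₂ r⌉`, the size of each bundle. -/
def r' : ℕ := (D.r + D.L - 1) / D.L

/-- `ρ = 2 ^ r'`, the number of columns of each bundle. -/
def ρ : ℕ := 2 ^ D.r'

/-- the number `n = log₂(s + 1) + ρ * log₂ r` of columns of `A`. -/
def n : ℕ := D.ℓ + D.ρ * D.L

/-- the number `m = 1 + log₂ r + 2 * s` of rows of `A`. -/
def m : ℕ := 1 + D.L + 2 * D.s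

/-- the budget `k = log₂(s + 1) + log₂ r`. -/
def k : ℕ := D.ℓ + D.L

/-- `sat_i(p, q)`: whether the `p`-th assignment of bundle `i` makes clause `q` true,
i.e. whether some literal of clause `q` whose variable belongs to bundle `i` is set
to its polarity by the `p`-th assignment of bundle `i` (nat-indexed version;
`false` outside the index ranges). -/
def satN (i p q : ℕ) : Bool :=
  if h : i < D.L ∧ p < D.ρ ∧ q < D.s then
    decide (∃ lit ∈ D.Clause ⟨q, h.2.2⟩, lit.var ∈ D.B ⟨i, h.1⟩ ∧
      D.asg ⟨i, h.1⟩ ⟨p, h.2.1⟩ lit.var = lit.pos)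
  else false

/-- The constructed binary matrix `A` (rows and columns 0-indexed;
entries outside the `m × n` range are irrelevant). -/
def A (row col : ℕ) : Bool :=
  if row = 0 then
    -- the all-zero row
    false
  else if row ≤ D.L then
    -- bundle indicator rows: row `i + 1` is `1` exactly on bundle `i`'s columns
    decide (D.ℓ + (row - 1) * D.ρ ≤ col ∧ col < D.ℓ + row * D.ρ)
  else if col < D.ℓ then
    -- clause rows on the consistency columns: the binary encoding of the
    -- (1-indexed) clause number
    Nat.testBit ((row - D.L - 1) / 2 + 1) col
  else if (row - D.L - 1) % 2 = 0 then
    -- odd row of clause `q = (row - L - 1) / 2`: `sat_i(p, q)` on the `p`-th of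
    -- bundle `i`'s columns
    D.satN ((col - D.ℓ) / D.ρ) ((col - D.ℓ) % D.ρ) ((row - D.L - 1) / 2)
  else
    -- even row of clause `q`: zero outside the consistency columns
    false

/-- `K` is a solution for the instance `(A, k)`: a set of at most `k` columns of `A`
such that the rows of `A` restricted to the columns in `K` are pairwise distinct. -/
def Solution (K : Finset ℕ) : Prop :=
  (∀ c ∈ K, c < D.n) ∧ K.card ≤ D.k ∧
    ∀ i j, i < D.m → j < D.m → i ≠ j → ∃ c ∈ K, D.A i c ≠ D.A j c

end DVInstance

section DVAux

lemma DV_testBit_diff {a b l : ℕ} (ha : a < 2 ^ l) (hb : b < 2 ^ l) (hab : a ≠ b) :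
    ∃ c, c < l ∧ Nat.testBit a c ≠ Nat.testBit b c := by
  by_contra h
  push_neg at h
  apply hab
  apply Nat.eq_of_testBit_eq
  intro i
  by_cases hi : i < l
  · exact h i hi
  · rw [Nat.testBit_lt_two_pow
        (lt_of_lt_of_le ha (Nat.pow_le_pow_right (by norm_num) (le_of_not_gt hi))),
      Nat.testBit_lt_two_pow
        (lt_of_lt_of_le hb (Nat.pow_le_pow_right (by norm_num) (le_of_not_gt hi)))]

namespace DVInstance

variable (D : DVInstance)

lemma rho_pos : 0 < D.ρ := by unfold DVInstance.ρ; positivity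

lemma div_bundle {a p : ℕ} (hp : p < D.ρ) : (a * D.ρ + p) / D.ρ = a := by
  rw [mul_comm, Nat.mul_add_div D.rho_pos, Nat.div_eq_of_lt hp, add_zero]

lemma mod_bundle {a p : ℕ} (hp : p < D.ρ) : (a * D.ρ + p) % D.ρ = p := by
  rw [mul_comm, Nat.mul_add_mod, Nat.mod_eq_of_lt hp]

lemma A_zero (c : ℕ) : D.A 0 c = false := by simp [DVInstance.A]

lemma A_bundle {i : ℕ} (hi : i < D.L) (c : ℕ) :
    D.A (i + 1) c = decide (D.ℓ + i * D.ρ ≤ c ∧ c < D.ℓ + (i + 1) * D.ρ) := by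
  unfold DVInstance.A
  rw [if_neg (by omega), if_pos (by omega)]
  norm_num

lemma A_bundle_at_self (i : Fin D.L) (p : Fin D.ρ) :
    D.A (i.val + 1) (D.ℓ + i.val * D.ρ + p.val) = true := by
  rw [D.A_bundle i.isLt]
  apply decide_eq_true
  refine ⟨Nat.le_add_right _ _, ?_⟩
  rw [add_mul, one_mul, ← Nat.add_assoc]
  exact Nat.add_lt_add_left p.isLt _

lemma A_bundle_at_other {i : ℕ} (hi : i < D.L) (j : Fin D.L) (p : Fin D.ρ)
    (hij : i ≠ j.val) :
    D.A (i + 1) (D.ℓ + j.val * D.ρ + p.val) = false := by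
  rw [D.A_bundle hi]
  apply decide_eq_false
  rintro ⟨h1, h2⟩
  rw [Nat.add_assoc] at h1 h2
  replace h1 := Nat.le_of_add_le_add_left h1
  replace h2 := Nat.lt_of_add_lt_add_left h2
  have e1 : (j.val * D.ρ + p.val) / D.ρ = j.val := D.div_bundle p.isLt
  have e2 : (j.val * D.ρ + p.val) / D.ρ = i := Nat.div_eq_of_lt_le h1 h2
  exact hij (e2 ▸ e1)

lemma A_clause_cons {x c : ℕ} (hx : D.L < x) (hc : c < D.ℓ) :
    D.A x c = Nat.testBit ((x - D.L - 1) / 2 + 1) c := by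
  unfold DVInstance.A
  rw [if_neg (by omega), if_neg (by omega), if_pos hc]

lemma A_clause_odd {q : ℕ} (hq : q < D.s) (i : Fin D.L) (p : Fin D.ρ) :
    D.A (D.L + 1 + 2 * q) (D.ℓ + i.val * D.ρ + p.val) = D.satN i.val p.val q := by
  unfold DVInstance.A
  rw [if_neg (by omega), if_neg (by omega), if_neg (by omega), if_pos (by omega)]
  have h3 : D.ℓ + i.val * D.ρ + p.val - D.ℓ = i.val * D.ρ + p.val := by
    generalize i.val * D.ρ = t
    omega
  rw [h3, D.div_bundle p.isLt, D.mod_bundle p.isLt]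
  congr 1
  omega

lemma A_clause_even {q c : ℕ} (hc : D.ℓ ≤ c) :
    D.A (D.L + 1 + 2 * q + 1) c = false := by
  unfold DVInstance.A
  rw [if_neg (by omega), if_neg (by omega), if_neg (by omega), if_neg (by omega)]

lemma satN_true (α : Fin D.r → Bool)
    (hα : ∀ q : Fin D.s, ∃ lit ∈ D.Clause q, α lit.var = lit.pos)
    (f : Fin D.L → Fin D.ρ)
    (hf : ∀ i, ∀ v ∈ D.B i, D.asg i (f i) v = α v) (q : Fin D.s) :
    ∃ i : Fin D.L, D.satN i.val (f i).val q.val = true := by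
  obtain ⟨lit, hlit, hpol⟩ := hα q
  obtain ⟨i, hi, -⟩ := D.hBpart lit.var
  refine ⟨i, ?_⟩
  unfold DVInstance.satN
  rw [dif_pos ⟨i.isLt, (f i).isLt, q.isLt⟩]
  apply decide_eq_true
  simp only [Fin.eta]
  exact ⟨lit, hlit, hi, (hf i lit.var hi).trans hpol⟩

end DVInstance

end DVAux

/-- If `α` is a satisfying assignment of `φ` and, for each bundle `i`,
`f i` is (the index of) a column among `B i`'s columns whose corresponding assignment
agrees with `α` on the variables of `B i`, then the set `K` consisting of all `ℓ`
consistency columns together with the columns `f i` has exactly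
`k = log₂(s + 1) + log₂ r` elements and is a solution for `(A, k)`. -/
theorem satisfiable_implies_solution (D : DVInstance) (α : Fin D.r → Bool)
    (hα : ∀ q : Fin D.s, ∃ lit ∈ D.Clause q, α lit.var = lit.pos)
    (f : Fin D.L → Fin D.ρ)
    (hf : ∀ i, ∀ v ∈ D.B i, D.asg i (f i) v = α v) :
    (Finset.range D.ℓ ∪
        Finset.image (fun i : Fin D.L => D.ℓ + i.val * D.ρ + (f i).val)
          Finset.univ).card = D.k ∧
    D.Solution (Finset.range D.ℓ ∪
      Finset.image (fun i : Fin D.L => D.ℓ + i.val * D.ρ + (f i).val)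
        Finset.univ) := by
  classical
  have hρ := D.rho_pos
  set g : Fin D.L → ℕ := fun i => D.ℓ + i.val * D.ρ + (f i).val with hg
  set K : Finset ℕ :=
    Finset.range D.ℓ ∪ Finset.image g Finset.univ with hK
  have hglb : ∀ i : Fin D.L, D.ℓ ≤ g i := fun i =>
    le_trans (Nat.le_add_right _ _) (Nat.le_add_right _ _)
  have hgn : ∀ i : Fin D.L, g i < D.n := by
    intro i
    have h1 : (i.val + 1) * D.ρ ≤ D.L * D.ρ :=
      mul_le_mul_left (Nat.succ_le_of_lt i.isLt) _
    have h2 : g i < D.ℓ + (i.val + 1) * D.ρ := by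
      show D.ℓ + i.val * D.ρ + (f i).val < _
      rw [add_mul, one_mul, ← Nat.add_assoc]
      exact Nat.add_lt_add_left (f i).isLt _
    have hn : D.n = D.ℓ + D.ρ * D.L := rfl
    rw [hn, mul_comm]
    exact lt_of_lt_of_le h2 (Nat.add_le_add_left h1 _)
  have hginj : Function.Injective g := by
    intro i j hij
    have h1 : i.val * D.ρ + (f i).val = j.val * D.ρ + (f j).val := by
      have : D.ℓ + (i.val * D.ρ + (f i).val) = D.ℓ + (j.val * D.ρ + (f j).val) := by
        rw [← Nat.add_assoc, ← Nat.add_assoc]; exact hij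
      exact Nat.add_left_cancel this
    have h2 : i.val = j.val := by
      have e1 := D.div_bundle (a := i.val) (f i).isLt
      have e2 := D.div_bundle (a := j.val) (f j).isLt
      rw [← e1, ← e2, h1]
    exact Fin.ext h2
  have hdisj : Disjoint (Finset.range D.ℓ) (Finset.image g Finset.univ) := by
    rw [Finset.disjoint_left]
    intro c hc hc2
    rw [Finset.mem_range] at hc
    obtain ⟨i, -, rfl⟩ := Finset.mem_image.mp hc2
    exact absurd hc (Nat.not_lt.mpr (hglb i))
  have hcard : K.card = D.k := by
    rw [hK, Finset.card_union_of_disjoint hdisj, Finset.card_range,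
      Finset.card_image_of_injective _ hginj, Finset.card_univ, Fintype.card_fin]
    rfl
  have hgK : ∀ i : Fin D.L, g i ∈ K :=
    fun i => Finset.mem_union_right _ (Finset.mem_image_of_mem _ (Finset.mem_univ i))
  have hconsK : ∀ c < D.ℓ, c ∈ K :=
    fun c hc => Finset.mem_union_left _ (Finset.mem_range.mpr hc)
  have hm : D.m = 1 + D.L + 2 * D.s := rfl
  have hs1 : ∀ q, q < D.s → q + 1 < 2 ^ D.ℓ := by
    intro q hq
    have h1 : 1 ≤ 2 ^ D.ℓ := Nat.one_le_two_pow
    have h2 := D.hs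
    omega
  have key : ∀ x y, x < D.m → y < D.m → x < y → ∃ c ∈ K, D.A x c ≠ D.A y c := by
    intro x y hx hy hxy
    by_cases hyb : y ≤ D.L
    · -- y is a bundle row, x = 0 or x a smaller bundle row
      have hy1 : 1 ≤ y := by omega
      set iy : Fin D.L := ⟨y - 1, by omega⟩ with hiy
      refine ⟨g iy, hgK iy, ?_⟩
      have hyv : D.A y (g iy) = true := by
        have h := D.A_bundle_at_self iy (f iy)
        rwa [show iy.val + 1 = y by simp [hiy]; omega] at h
      rw [hyv]
      rcases Nat.eq_zero_or_pos x with rfl | hx0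
      · rw [D.A_zero]; simp
      · have hxv : D.A x (g iy) = false := by
          have h := D.A_bundle_at_other (i := x - 1) (by omega) iy (f iy)
            (by simp [hiy]; omega)
          rwa [show x - 1 + 1 = x by omega] at h
        rw [hxv]; simp
    · -- y is a clause row
      have hy1 : D.L < y := by omega
      set qy := (y - D.L - 1) / 2 with hqy
      have hqys : qy < D.s := by rw [hm] at hy; omega
      by_cases hxb : x ≤ D.L
      · -- x is the zero row or a bundle row: use a set bit of qy + 1
        obtain ⟨c, hcl, hcne⟩ := DV_testBit_diff (hs1 qy hqys)
          (show 0 < 2 ^ D.ℓ by positivity) (by omega)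
        refine ⟨c, hconsK c hcl, ?_⟩
        have hyc : D.A y c = Nat.testBit (qy + 1) c := D.A_clause_cons hy1 hcl
        have hxc : D.A x c = false := by
          rcases Nat.eq_zero_or_pos x with rfl | hx0
          · exact D.A_zero c
          · have h := D.A_bundle (i := x - 1) (by omega) c
            rw [show x - 1 + 1 = x by omega] at h
            rw [h]
            apply decide_eq_false
            rintro ⟨h1, -⟩
            exact absurd (lt_of_lt_of_le hcl (Nat.le_add_right _ _)) (Nat.not_lt.mpr h1)
        rw [hyc, hxc]
        simpa using hcne
      · -- both are clause rows
        have hx1 : D.L < x := by omega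
        set qx := (x - D.L - 1) / 2 with hqx
        have hqxs : qx < D.s := by rw [hm] at hx; omega
        by_cases hq : qx = qy
        · -- same clause, different parity: x is the odd row, y the even row
          have hxe : x = D.L + 1 + 2 * qx := by omega
          have hye : y = D.L + 1 + 2 * qy + 1 := by omega
          obtain ⟨i0, hi0⟩ := D.satN_true α hα f hf ⟨qy, hqys⟩
          refine ⟨g i0, hgK i0, ?_⟩
          have h1 : D.A x (g i0) = true := by
            rw [hxe, hq, D.A_clause_odd hqys i0 (f i0)]
            exact hi0
          have h2 : D.A y (g i0) = false := by
            rw [hye]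
            exact D.A_clause_even (hglb i0)
          rw [h1, h2]; simp
        · -- different clauses: use a bit where the encodings differ
          obtain ⟨c, hcl, hcne⟩ := DV_testBit_diff (hs1 qx hqxs) (hs1 qy hqys)
            (by omega)
          refine ⟨c, hconsK c hcl, ?_⟩
          rw [D.A_clause_cons hx1 hcl, D.A_clause_cons hy1 hcl]
          exact hcne
  refine ⟨hcard, ?_, ?_, ?_⟩
  · intro c hc
    rcases Finset.mem_union.mp hc with h | h
    · have h1 := Finset.mem_range.mp h
      have h2 : D.ℓ ≤ D.n := Nat.le_add_right _ _
      omega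
    · obtain ⟨i, -, rfl⟩ := Finset.mem_image.mp h
      exact hgn i
  · exact le_of_eq hcard
  · intro i j hi hj hij
    rcases Nat.lt_or_ge i j with h | h
    · exact key i j hi hj h
    · obtain ⟨c, hc, hne⟩ := key j i hj hi (by omega)
      exact ⟨c, hc, hne.symm⟩
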